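/- Let (𝒫,𝓛) be a canonical horizontal shadow representation in general position such that the graph G(𝒫,𝓛) is connected. Let D ⊆ 𝒫 ∪ 𝓛 be a dominating set of 𝒫 ∪ 𝓛 of minimum cardinality, and suppose there exists p ∈ D ∩ 𝒫 with (N(p) ∪ H(p)) ∩ D ≠ ∅. Then there exists a dominating set D′ of 𝒫 ∪ 𝓛 with |D′| = |D| and |D′ ∩ 𝒫| = |D ∩ 𝒫| − 1. -/

import Mathlib

open Set

abbrev Pt : Type := ℝ × ℝ

/-- The shadow of a point `t`. -/
def ptShadow (t : Pt) : Set Pt := {p : Pt | p.1 ≤ t.1 ∧ p.2 - p.1 ≤ t.2 - t.1}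

/-- The shadow of a set of points. -/
def setShadow (L : Set Pt) : Set Pt := ⋃ t ∈ L, ptShadow t

/-- The reverse shadow of a point `t`. -/
def ptRevShadow (t : Pt) : Set Pt := {p : Pt | t.1 ≤ p.1 ∧ t.2 - t.1 ≤ p.2 - p.1}

/-- The reverse shadow of a set of points. -/
def setRevShadow (L : Set Pt) : Set Pt := ⋃ t ∈ L, ptRevShadow t

/-- The region `A_t`. -/
def regionA (t : Pt) : Set Pt := {p : Pt | t.1 ≤ p.1 ∧ p.2 - p.1 ≤ t.2 - t.1}

/-- The region `B_t`. -/
def regionB (t : Pt) : Set Pt := {p : Pt | p.1 ≤ t.1 ∧ t.2 - t.1 ≤ p.2 - p.1}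

/-- `s ∧ t := (s₁, s₁ + t₂ − t₁)`. -/
def diagMeet (s t : Pt) : Pt := (s.1, s.1 + t.2 - t.1)

/-- A closed horizontal line segment, given by its left and right endpoints. -/
structure HSeg where
  l : Pt
  r : Pt
  horiz : l.2 = r.2
  le : l.1 ≤ r.1

/-- The set of points of a horizontal segment. -/
def HSeg.carrier (L : HSeg) : Set Pt := segment ℝ L.l L.r

/-- An element of a horizontal shadow representation: a point or a segment. -/
inductive Elem where
  | pt : Pt → Elem
  | seg : HSeg → Elem

/-- The set of points of the plane occupied by an element. -/
def Elem.carrier : Elem → Set Pt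
  | .pt p => ({p} : Set Pt)
  | .seg L => L.carrier

/-- Adjacency between elements: two points are never adjacent; a point `p` and a
segment `L` are adjacent iff `p ∈ S_L`; two segments `L, L'` are adjacent iff
`L ∩ S_{L'} ≠ ∅` or `L' ∩ S_L ≠ ∅`. -/
def ElemAdj : Elem → Elem → Prop
  | .pt _, .pt _ => False
  | .pt p, .seg L => p ∈ setShadow L.carrier
  | .seg L, .pt p => p ∈ setShadow L.carrier
  | .seg L, .seg L' =>
      (L.carrier ∩ setShadow L'.carrier).Nonempty ∨ (L'.carrier ∩ setShadow L.carrier).Nonempty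

/-- `x` is dominated by the set `D`: it belongs to `D` or is adjacent to a member of `D`. -/
def DominatedBy (D : Set Elem) (x : Elem) : Prop := x ∈ D ∨ ∃ d ∈ D, ElemAdj x d

/-- `D` dominates `X`. -/
def Dominates (D X : Set Elem) : Prop := ∀ x ∈ X, DominatedBy D x

/-- A horizontal shadow representation: a finite set of points and a finite set of
closed horizontal segments. -/
structure HSR where
  P : Set Pt
  Ls : Set HSeg
  finP : P.Finite
  finL : Ls.Finite

/-- The elements (points and segments) of a representation. -/
def HSR.elems (R : HSR) : Set Elem := (Elem.pt '' R.P) ∪ (Elem.seg '' R.Ls)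

/-- All points of `𝒫` together with all endpoints of segments of `𝓛`. -/
def HSR.keyPts (R : HSR) : Set Pt := R.P ∪ ⋃ L ∈ R.Ls, ({L.l, L.r} : Set Pt)

/-- General position: all points of `𝒫` and all endpoints of segments of `𝓛` have
pairwise distinct first coordinates and pairwise distinct values of
(second coordinate minus first coordinate). -/
def GenPos (R : HSR) : Prop :=
  ∀ s ∈ R.keyPts, ∀ t ∈ R.keyPts, s ≠ t → s.1 ≠ t.1 ∧ s.2 - s.1 ≠ t.2 - t.1

/-- `(L_j, L_{j'})` is a left-crossing pair. -/
def LeftCrossing (Lj Lj' : HSeg) : Prop := Lj.l ∈ ptShadow Lj'.l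

/-- `(L_i, L_{i'})` is a right-crossing pair. -/
def RightCrossing (Li Li' : HSeg) : Prop := Li'.r ∈ ptShadow Li.r

/-- `𝓛^right_{j,j′}`. -/
def LRightPair (R : HSR) (Lj Lj' : HSeg) : Set Elem :=
  {x | x ∈ R.elems ∧ Elem.carrier x ⊆ regionA (diagMeet Lj.l Lj'.l)}

/-- `𝓛^left_{i,i′}`. -/
def LLeftPair (R : HSR) (Li Li' : HSeg) : Set Elem :=
  {x | x ∈ R.elems ∧ Elem.carrier x ⊆ regionB (diagMeet Li.r Li'.r)}

/-- Adjacency of elements is symmetric. -/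
lemma elemAdj_symm : ∀ {x y : Elem}, ElemAdj x y → ElemAdj y x := by
  intro x y h
  match x, y with
  | .pt _, .pt _ => exact h.elim
  | .pt _, .seg _ => exact h
  | .seg _, .pt _ => exact h
  | .seg _, .seg _ => exact h.symm

/-- The graph `G(𝒫,𝓛)` on the elements of the representation. -/
def graphOf (R : HSR) : SimpleGraph R.elems where
  Adj x y := x ≠ y ∧ ElemAdj x.1 y.1
  symm := by
    constructor
    intro x y h
    exact ⟨h.1.symm, elemAdj_symm h.2⟩
  loopless := by
    constructor
    intro x h
    exact h.1 rfl

/-- The neighbourhood `N(p)` of a point `p`, as a set of elements. -/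
def NElemSet (R : HSR) (p : Pt) : Set Elem :=
  {x | ∃ L ∈ R.Ls, p ∈ setShadow L.carrier ∧ x = Elem.seg L}

/-- The hovering set `H(p)` of a point `p`, as a set of elements. -/
def HoverSet (R : HSR) (p : Pt) : Set Elem :=
  {x | (∃ p' ∈ R.P, p' ≠ p ∧ p' ∈ ptShadow p ∧ x = Elem.pt p') ∨
    (∃ L ∈ R.Ls, (L.carrier ∩ ptShadow p).Nonempty ∧ p ∉ setShadow L.carrier ∧
      x = Elem.seg L)}

/-- A representation is canonical if every point has a segment in its hovering set. -/
def Canonical (R : HSR) : Prop := ∀ p ∈ R.P, ∃ L ∈ R.Ls, Elem.seg L ∈ HoverSet R p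

lemma ptShadow_trans {q p t : Pt} (h1 : q ∈ ptShadow p) (h2 : p ∈ ptShadow t) :
    q ∈ ptShadow t :=
  ⟨h1.1.trans h2.1, h1.2.trans h2.2⟩

lemma mem_setShadow {p : Pt} {S : Set Pt} : p ∈ setShadow S ↔ ∃ t ∈ S, p ∈ ptShadow t := by
  simp [setShadow]

lemma ptShadow_setShadow {q p : Pt} {S : Set Pt} (h1 : q ∈ ptShadow p) (h2 : p ∈ setShadow S) :
    q ∈ setShadow S := by
  rcases mem_setShadow.1 h2 with ⟨t, ht, hpt⟩
  exact mem_setShadow.2 ⟨t, ht, ptShadow_trans h1 hpt⟩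

lemma HSR.elems_finite (R : HSR) : R.elems.Finite :=
  (R.finP.image _).union (R.finL.image _)

lemma seg_mem_elems {R : HSR} {L : HSeg} (h : Elem.seg L ∈ R.elems) : L ∈ R.Ls := by
  rcases h with ⟨q, -, hq⟩ | ⟨L', hL', hL2⟩
  · cases hq
  · cases hL2; exact hL'

/-- A segment with a point in the shadow of `p` is adjacent to every segment whose
shadow contains `p`. -/
lemma hover_covers {p : Pt} {L₁ : HSeg} (h : (L₁.carrier ∩ ptShadow p).Nonempty) {L : HSeg}
    (hL : p ∈ setShadow L.carrier) : ElemAdj (Elem.seg L) (Elem.seg L₁) := by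
  obtain ⟨q, hq1, hq2⟩ := h
  exact Or.inr ⟨q, hq1, ptShadow_setShadow hq2 hL⟩

/-- In a connected representation, every point of `𝒫` has a neighbouring segment,
provided some segment exists. -/
lemma exists_neighbor (R : HSR) (hconn : (graphOf R).Connected) {p : Pt} (hp : p ∈ R.P)
    {L₀ : HSeg} (hL₀ : L₀ ∈ R.Ls) : ∃ L ∈ R.Ls, p ∈ setShadow L.carrier := by
  have ha : Elem.pt p ∈ R.elems := Or.inl ⟨p, hp, rfl⟩
  have hb : Elem.seg L₀ ∈ R.elems := Or.inr ⟨L₀, hL₀, rfl⟩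
  obtain ⟨w⟩ := hconn ⟨Elem.pt p, ha⟩ ⟨Elem.seg L₀, hb⟩
  have haux : ∀ {a b : R.elems} (_ : (graphOf R).Walk a b), a ≠ b →
      ∃ v, (graphOf R).Adj a v := by
    intro a b w hne
    cases w with
    | nil => exact absurd rfl hne
    | cons h _ => exact ⟨_, h⟩
  have hne : (⟨Elem.pt p, ha⟩ : R.elems) ≠ ⟨Elem.seg L₀, hb⟩ := by
    intro h
    exact absurd (congrArg Subtype.val h) (by simp)
  obtain ⟨⟨y, hy⟩, hadj⟩ := haux w hne
  cases y with
  | pt q => exact absurd hadj.2 id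
  | seg L => exact ⟨L, seg_mem_elems hy, hadj.2⟩

/-- Key auxiliary: if `D'` contains `D \ {p}`, dominates `p` by adjacency, and every
neighbour segment of `p` is adjacent to a member of `D'`, then `D'` dominates the
whole representation (given that `D` does). -/
lemma dom_aux (R : HSR) (D : Set Elem) (hdom : Dominates D R.elems) (p : Pt)
    (D' : Set Elem) (hsub : D \ {Elem.pt p} ⊆ D')
    (hp : ∃ e ∈ D', ElemAdj (Elem.pt p) e)
    (hN : ∀ L ∈ R.Ls, p ∈ setShadow L.carrier → ∃ e ∈ D', ElemAdj (Elem.seg L) e) :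
    Dominates D' R.elems := by
  intro x hx
  rcases hdom x hx with hxD | ⟨e, heD, hadj⟩
  · by_cases hxp : x = Elem.pt p
    · subst hxp; exact Or.inr hp
    · exact Or.inl (hsub ⟨hxD, hxp⟩)
  · by_cases hep : e = Elem.pt p
    · subst hep
      cases x with
      | pt q => exact absurd hadj id
      | seg L => exact Or.inr (hN L (seg_mem_elems hx) hadj)
    · exact Or.inr ⟨e, hsub ⟨heD, hep⟩, hadj⟩

/-- In a connected canonical representation, if a minimum dominating
set `D` contains a point `p` with `(N(p) ∪ H(p)) ∩ D ≠ ∅`, then there is a dominating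
set of the same cardinality using one point fewer. -/
theorem stmt18 (R : HSR) (hgp : GenPos R) (hcan : Canonical R)
    (hconn : (graphOf R).Connected)
    (D : Set Elem) (hD : D ⊆ R.elems) (hdom : Dominates D R.elems)
    (hmin : ∀ D' : Set Elem, D' ⊆ R.elems → Dominates D' R.elems → D.ncard ≤ D'.ncard)
    (p : Pt) (hp : p ∈ R.P) (hpD : Elem.pt p ∈ D)
    (hint : ((NElemSet R p ∪ HoverSet R p) ∩ D).Nonempty) :
    ∃ D' : Set Elem, D' ⊆ R.elems ∧ Dominates D' R.elems ∧ D'.ncard = D.ncard ∧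
      (D ∩ (Elem.pt '' R.P)).ncard = (D' ∩ (Elem.pt '' R.P)).ncard + 1 := by
  classical
  have hfinD : D.Finite := R.elems_finite.subset hD
  -- a hovering segment of p
  obtain ⟨Lh0, hLh0, hhov⟩ := hcan p hp
  have hhover : ∃ Lh ∈ R.Ls, (Lh.carrier ∩ ptShadow p).Nonempty ∧ p ∉ setShadow Lh.carrier := by
    rcases hhov with ⟨p', -, -, -, heq⟩ | ⟨L', hL', hint', hnot, -⟩
    · cases heq
    · exact ⟨L', hL', hint', hnot⟩
  obtain ⟨Lh, hLhLs, hLhint, -⟩ := hhover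
  -- a neighbouring segment of p
  obtain ⟨Ls0, hLs0, hpLs0⟩ := exists_neighbor R hconn hp hLhLs
  -- minimality: D \ {p} cannot dominate everything
  have hcontra : ∀ (_ : ∃ e ∈ D \ {Elem.pt p}, ElemAdj (Elem.pt p) e)
      (_ : ∀ L ∈ R.Ls, p ∈ setShadow L.carrier →
        ∃ e ∈ D \ {Elem.pt p}, ElemAdj (Elem.seg L) e), False := by
    intro hp' hN
    have hdom' := dom_aux R D hdom p _ (subset_refl _) hp' hN
    have h1 := hmin _ (Set.diff_subset.trans hD) hdom'
    have h2 := Set.ncard_diff_singleton_add_one hpD hfinD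
    omega
  have key : ∃ A ∈ R.Ls, Elem.seg A ∉ D ∧
      (∃ e ∈ insert (Elem.seg A) (D \ {Elem.pt p}), ElemAdj (Elem.pt p) e) ∧
      (∀ L ∈ R.Ls, p ∈ setShadow L.carrier →
        ∃ e ∈ insert (Elem.seg A) (D \ {Elem.pt p}), ElemAdj (Elem.seg L) e) := by
    obtain ⟨d, hdNH, hdD⟩ := hint
    rcases hdNH with hdN | hdH
    · -- the witness is a neighbour segment of p
      obtain ⟨L0, hL0Ls, hpL0, rfl⟩ := hdN
      have hd0 : Elem.seg L0 ∈ D \ {Elem.pt p} := ⟨hdD, by simp⟩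
      by_cases hLhD : Elem.seg Lh ∈ D
      · exact (hcontra ⟨Elem.seg L0, hd0, hpL0⟩
          (fun L hLLs hpL => ⟨Elem.seg Lh, ⟨hLhD, by simp⟩, hover_covers hLhint hpL⟩)).elim
      · exact ⟨Lh, hLhLs, hLhD, ⟨Elem.seg L0, Or.inr hd0, hpL0⟩,
          fun L hLLs hpL => ⟨Elem.seg Lh, Or.inl rfl, hover_covers hLhint hpL⟩⟩
    · -- the witness is in the hovering set of p
      have hcov : d ∈ D \ {Elem.pt p} ∧
          ∀ L ∈ R.Ls, p ∈ setShadow L.carrier → ElemAdj (Elem.seg L) d := by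
        rcases hdH with ⟨p', hp'P, hp'ne, hp'sh, rfl⟩ | ⟨L1, hL1, hL1int, hL1not, rfl⟩
        · exact ⟨⟨hdD, by simp [hp'ne]⟩, fun L _ hpL => ptShadow_setShadow hp'sh hpL⟩
        · exact ⟨⟨hdD, by simp⟩, fun L _ hpL => hover_covers hL1int hpL⟩
      obtain ⟨hd0, hcov⟩ := hcov
      by_cases hLsD : Elem.seg Ls0 ∈ D
      · exact (hcontra ⟨Elem.seg Ls0, ⟨hLsD, by simp⟩, hpLs0⟩
          (fun L hLLs hpL => ⟨d, hd0, hcov L hLLs hpL⟩)).elim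
      · exact ⟨Ls0, hLs0, hLsD, ⟨Elem.seg Ls0, Or.inl rfl, hpLs0⟩,
          fun L hLLs hpL => ⟨d, Or.inr hd0, hcov L hLLs hpL⟩⟩
  obtain ⟨A, hALs, hAD, hpA, hNA⟩ := key
  refine ⟨insert (Elem.seg A) (D \ {Elem.pt p}), ?_, ?_, ?_, ?_⟩
  · exact Set.insert_subset (Or.inr ⟨A, hALs, rfl⟩) (Set.diff_subset.trans hD)
  · exact dom_aux R D hdom p _ (Set.subset_insert _ _) hpA hNA
  · have h1 : Elem.seg A ∉ D \ {Elem.pt p} := fun h => hAD h.1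
    rw [Set.ncard_insert_of_notMem h1 hfinD.diff]
    have h2 := Set.ncard_diff_singleton_add_one hpD hfinD
    omega
  · have hAP : Elem.seg A ∉ Elem.pt '' R.P := by rintro ⟨q, -, hq⟩; cases hq
    have heq : insert (Elem.seg A) (D \ {Elem.pt p}) ∩ (Elem.pt '' R.P)
        = (D ∩ (Elem.pt '' R.P)) \ {Elem.pt p} := by
      rw [Set.insert_inter_of_notMem hAP]
      ext x
      simp only [Set.mem_inter_iff, Set.mem_diff]
      tauto
    rw [heq]
    have hm : Elem.pt p ∈ D ∩ (Elem.pt '' R.P) := ⟨hpD, ⟨p, hp, rfl⟩⟩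
    exact (Set.ncard_diff_singleton_add_one hm (hfinD.inter_of_left _)).symm
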